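/- Let σ > 0 with σ < 1, β > 0, and define σ̂² = (1 + σ²β²)/(σ(1 + β²)), β̂ = β(1 − σ²)/(1 + σ²β²), Â = 1 + β̂² − 1/σ̂⁴. Then 2β̂/(σ̂²(√(Â²σ̂⁴ + 4β̂²) + Âσ̂²)) + β̂ = β. -/

import Mathlib

/-- For `0 < σ < 1` and `β > 0`, with `σ̂² = (1 + σ²β²)/(σ(1 + β²))`,
`β̂ = β(1 − σ²)/(1 + σ²β²)`, `Â = 1 + β̂² − 1/σ̂⁴`, the major-axis slope
`2β̂/(σ̂²(√(Â²σ̂⁴ + 4β̂²) + Âσ̂²)) + β̂` equals `β`. -/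
theorem rotated_window_slope_lt_one (σ β : ℝ) (hσ0 : 0 < σ) (hσ1 : σ < 1) (hβ : 0 < β)
    (s βh Ah : ℝ)
    (hs : s = (1 + σ ^ 2 * β ^ 2) / (σ * (1 + β ^ 2)))
    (hβh : βh = β * (1 - σ ^ 2) / (1 + σ ^ 2 * β ^ 2))
    (hAh : Ah = 1 + βh ^ 2 - 1 / s ^ 2) :
    2 * βh / (s * (Real.sqrt (Ah ^ 2 * s ^ 2 + 4 * βh ^ 2) + Ah * s)) + βh = β := by
  have h1σ : 0 < 1 - σ ^ 2 := by nlinarith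
  have hP : 0 < 1 + σ ^ 2 * β ^ 2 := by positivity
  have hQ : 0 < 1 + β ^ 2 := by positivity
  have hs0 : 0 < s := by rw [hs]; positivity
  have hβh0 : 0 < βh := by rw [hβh]; positivity
  have hd : β - βh = σ ^ 2 * (1 + β ^ 2) * β / (1 + σ ^ 2 * β ^ 2) := by
    rw [hβh]; field_simp; ring
  have hdpos : 0 < β - βh := by rw [hd]; positivity
  have hB' : s ^ 2 * (1 + βh * β) - 1 = (1 - σ ^ 2) / (σ ^ 2 * (1 + β ^ 2)) := by
    rw [hs, hβh]; field_simp; ring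
  have h2 : 0 < s ^ 2 * (1 + βh * β) - 1 := by rw [hB']; positivity
  have hBpos : 0 < 1 + βh * β - 1 / s ^ 2 := by
    have heq : 1 + βh * β - 1 / s ^ 2 = (s ^ 2 * (1 + βh * β) - 1) / s ^ 2 := by
      field_simp
    rw [heq]; exact div_pos h2 (by positivity)
  have hCpos : 0 < Ah + βh * (β - βh) := by
    have heq : Ah + βh * (β - βh) = 1 + βh * β - 1 / s ^ 2 := by rw [hAh]; ring
    rw [heq]; exact hBpos
  have hEpos : 0 < Ah * s + 2 * s * βh * (β - βh) := by
    have heq : Ah * s + 2 * s * βh * (β - βh)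
        = s * ((Ah + βh * (β - βh)) + βh * (β - βh)) := by ring
    rw [heq]
    exact mul_pos hs0 (by nlinarith [mul_pos hβh0 hdpos])
  have hE2 : Ah ^ 2 * s ^ 2 + 4 * βh ^ 2 = (Ah * s + 2 * s * βh * (β - βh)) ^ 2 := by
    subst hAh; subst hβh; subst hs
    field_simp
    ring
  have hsqrt : Real.sqrt (Ah ^ 2 * s ^ 2 + 4 * βh ^ 2)
      = Ah * s + 2 * s * βh * (β - βh) := by
    rw [hE2]; exact Real.sqrt_sq hEpos.le
  rw [hsqrt]
  have hdenpos : 0 < s * ((Ah * s + 2 * s * βh * (β - βh)) + Ah * s) := by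
    have heq : s * ((Ah * s + 2 * s * βh * (β - βh)) + Ah * s)
        = 2 * s ^ 2 * (Ah + βh * (β - βh)) := by ring
    rw [heq]; exact mul_pos (by positivity) hCpos
  have hgoal : 2 * βh / (s * ((Ah * s + 2 * s * βh * (β - βh)) + Ah * s)) = β - βh := by
    rw [div_eq_iff hdenpos.ne']
    subst hAh; subst hβh; subst hs
    field_simp
    ring
  linarith [hgoal]
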